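/- Let n ≥ 2, K > 0, and let A be an n×n random matrix with mutually independent complex entries a_ij satisfying E|a_ij|² ≤ K for all i, j. Suppose there exist indices i₀, j₀ with P(a_{i₀j₀} = 0) = P > 0. Then there is a constant C > 0 depending only on P and K such that for every λ > 0 and every t > 0 there exists a deterministic matrix M ∈ ℂ^{n×n} with ‖M‖_op = t and P[ σ_n(M + λA) ≤ C·λ²·n^{3/2}/t ] ≥ 0.99·P. -/

import Mathlib

open MeasureTheory ProbabilityTheory

/-- The least singular value `σ_n(M) = inf_{‖x‖₂ = 1} ‖Mx‖₂`. -/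
noncomputable def lsv {n : ℕ} (M : Matrix (Fin n) (Fin n) ℂ) : ℝ :=
  ⨅ x : Metric.sphere (0 : EuclideanSpace ℂ (Fin n)) 1,
    ‖(WithLp.equiv 2 (Fin n → ℂ)).symm (M.mulVec ((WithLp.equiv 2 (Fin n → ℂ)) x.1))‖

/-- The operator norm `‖M‖_op = sup_{‖x‖₂ = 1} ‖Mx‖₂`. -/
noncomputable def opNorm {n : ℕ} (M : Matrix (Fin n) (Fin n) ℂ) : ℝ :=
  ⨆ x : Metric.sphere (0 : EuclideanSpace ℂ (Fin n)) 1,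
    ‖(WithLp.equiv 2 (Fin n → ℂ)).symm (M.mulVec ((WithLp.equiv 2 (Fin n → ℂ)) x.1))‖

set_option maxHeartbeats 1000000
open scoped ENNReal NNReal

lemma euclid_norm {n : ℕ} (v : Fin n → ℂ) :
    ‖(WithLp.equiv 2 (Fin n → ℂ)).symm v‖ = Real.sqrt (∑ i, ‖v i‖ ^ 2) := by
  rw [EuclideanSpace.norm_eq]; rfl

lemma lsv_le {n : ℕ} (B : Matrix (Fin n) (Fin n) ℂ) (v : Fin n → ℂ)
    (hv : 1 ≤ ‖(WithLp.equiv 2 (Fin n → ℂ)).symm v‖) :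
    lsv B ≤ ‖(WithLp.equiv 2 (Fin n → ℂ)).symm (B.mulVec v)‖ := by
  set c : ℝ := ‖(WithLp.equiv 2 (Fin n → ℂ)).symm v‖ with hc
  have hc0 : 0 < c := lt_of_lt_of_le one_pos hv
  set u : EuclideanSpace ℂ (Fin n) := c⁻¹ • ((WithLp.equiv 2 (Fin n → ℂ)).symm v) with hu
  have hun : ‖u‖ = 1 := by
    rw [hu, norm_smul, norm_inv, Real.norm_eq_abs, abs_of_pos hc0, ← hc]
    field_simp
  have hmem : u ∈ Metric.sphere (0 : EuclideanSpace ℂ (Fin n)) 1 :=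
    mem_sphere_zero_iff_norm.mpr hun
  have h1 : lsv B ≤ ‖(WithLp.equiv 2 (Fin n → ℂ)).symm (B.mulVec ((WithLp.equiv 2 (Fin n → ℂ)) u))‖ := by
    apply ciInf_le ⟨0, by rintro r ⟨y, rfl⟩; exact norm_nonneg _⟩ (⟨u, hmem⟩ : Metric.sphere (0 : EuclideanSpace ℂ (Fin n)) 1)
  have h2 : (WithLp.equiv 2 (Fin n → ℂ)) u = c⁻¹ • v := by
    rw [hu]; simp
  rw [h2, Matrix.mulVec_smul] at h1
  have h3 : ‖(WithLp.equiv 2 (Fin n → ℂ)).symm (c⁻¹ • B.mulVec v)‖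
      = c⁻¹ * ‖(WithLp.equiv 2 (Fin n → ℂ)).symm (B.mulVec v)‖ := by
    have : (WithLp.equiv 2 (Fin n → ℂ)).symm (c⁻¹ • B.mulVec v)
        = c⁻¹ • (WithLp.equiv 2 (Fin n → ℂ)).symm (B.mulVec v) := by simp
    rw [this, norm_smul, Real.norm_eq_abs, abs_of_pos (by positivity)]
  rw [h3] at h1
  calc lsv B ≤ c⁻¹ * ‖(WithLp.equiv 2 (Fin n → ℂ)).symm (B.mulVec v)‖ := h1
    _ ≤ 1 * ‖(WithLp.equiv 2 (Fin n → ℂ)).symm (B.mulVec v)‖ := by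
        apply mul_le_mul_of_nonneg_right _ (norm_nonneg _)
        rw [inv_le_one_iff₀]; right; exact hv
    _ = _ := one_mul _

noncomputable def Mwit {n : ℕ} (t : ℝ) (i₀ j₀ : Fin n) : Matrix (Fin n) (Fin n) ℂ :=
  Matrix.of fun i j => if j ≠ j₀ ∧ i = Equiv.swap i₀ j₀ j then (t : ℂ) else 0

lemma Mwit_mulVec {n : ℕ} (t : ℝ) (i₀ j₀ : Fin n) (v : Fin n → ℂ) (i : Fin n) :
    (Mwit t i₀ j₀).mulVec v i = if i = i₀ then 0 else t * v (Equiv.swap i₀ j₀ i) := by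
  unfold Mwit Matrix.mulVec dotProduct
  rw [Finset.sum_eq_single (Equiv.swap i₀ j₀ i)]
  · simp only [Matrix.of_apply, Equiv.swap_apply_self]
    have hiff : Equiv.swap i₀ j₀ i = j₀ ↔ i = i₀ := by
      constructor
      · intro h
        have := congrArg (Equiv.swap i₀ j₀) h
        rwa [Equiv.swap_apply_self, Equiv.swap_apply_right] at this
      · rintro rfl; exact Equiv.swap_apply_left _ _
    by_cases h : i = i₀
    · simp [h, hiff.mpr h]
    · have : Equiv.swap i₀ j₀ i ≠ j₀ := fun hh => h (hiff.mp hh)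
      simp [h, this]
  · intro j _ hj
    have : i ≠ Equiv.swap i₀ j₀ j := by
      intro hh
      apply hj
      rw [hh, Equiv.swap_apply_self]
    simp [Matrix.of_apply, this]
  · intro h; exact absurd (Finset.mem_univ _) h

lemma opNorm_Mwit {n : ℕ} (hn : 2 ≤ n) {t : ℝ} (ht : 0 < t) (i₀ j₀ : Fin n) :
    opNorm (Mwit t i₀ j₀) = t := by
  have : NeZero n := ⟨by omega⟩
  have hnt : Nontrivial (Fin n) := Fin.nontrivial_iff_two_le.mpr hn
  -- upper bound for every sphere point
  have hub : ∀ x : Metric.sphere (0 : EuclideanSpace ℂ (Fin n)) 1,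
      ‖(WithLp.equiv 2 (Fin n → ℂ)).symm ((Mwit t i₀ j₀).mulVec ((WithLp.equiv 2 (Fin n → ℂ)) x.1))‖ ≤ t := by
    rintro ⟨x, hx⟩
    have hx1 : ‖x‖ = 1 := mem_sphere_zero_iff_norm.mp hx
    have hxs : ∑ i, ‖x i‖ ^ 2 = 1 := by
      have := EuclideanSpace.norm_eq x
      rw [hx1] at this
      have h2 : Real.sqrt (∑ i, ‖x i‖ ^ 2) = 1 := this.symm
      nlinarith [Real.sq_sqrt (show (0:ℝ) ≤ ∑ i, ‖x i‖ ^ 2 by positivity), h2]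
    rw [EuclideanSpace.norm_eq]
    have key : ∑ i, ‖(Mwit t i₀ j₀).mulVec ((WithLp.equiv 2 (Fin n → ℂ)) x) i‖ ^ 2 ≤ t ^ 2 := by
      calc ∑ i, ‖(Mwit t i₀ j₀).mulVec ((WithLp.equiv 2 (Fin n → ℂ)) x) i‖ ^ 2
          ≤ ∑ i, t ^ 2 * ‖x (Equiv.swap i₀ j₀ i)‖ ^ 2 := by
            apply Finset.sum_le_sum
            intro i _
            rw [Mwit_mulVec]
            by_cases h : i = i₀
            · simp [h]; positivity
            · simp only [h, if_false]
              rw [norm_mul, Complex.norm_real, Real.norm_eq_abs, abs_of_pos ht, mul_pow]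
              rfl
        _ = t ^ 2 * ∑ i, ‖x (Equiv.swap i₀ j₀ i)‖ ^ 2 := by rw [Finset.mul_sum]
        _ = t ^ 2 * ∑ i, ‖x i‖ ^ 2 := by
            congr 1
            exact Equiv.sum_comp (Equiv.swap i₀ j₀) (fun i => ‖x i‖ ^ 2)
        _ = t ^ 2 := by rw [hxs, mul_one]
    calc Real.sqrt (∑ i, ‖(WithLp.equiv 2 (Fin n → ℂ)).symm ((Mwit t i₀ j₀).mulVec ((WithLp.equiv 2 (Fin n → ℂ)) x)) i‖ ^ 2)
        ≤ Real.sqrt (t ^ 2) := Real.sqrt_le_sqrt key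
      _ = t := Real.sqrt_sq ht.le
  -- witness
  obtain ⟨j₁, hj₁⟩ := exists_ne j₀
  set x : EuclideanSpace ℂ (Fin n) := EuclideanSpace.single j₁ (1 : ℂ) with hxdef
  have hx1 : ‖x‖ = 1 := by rw [hxdef, EuclideanSpace.norm_single, norm_one]
  have hmem : x ∈ Metric.sphere (0 : EuclideanSpace ℂ (Fin n)) 1 := mem_sphere_zero_iff_norm.mpr hx1
  have hwit : ‖(WithLp.equiv 2 (Fin n → ℂ)).symm ((Mwit t i₀ j₀).mulVec ((WithLp.equiv 2 (Fin n → ℂ)) x))‖ = t := by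
    have hcoord : ∀ j, (WithLp.equiv 2 (Fin n → ℂ)) x j = if j = j₁ then 1 else 0 := by
      intro j
      rw [hxdef]
      exact EuclideanSpace.single_apply j₁ 1 j
    have hMx : (Mwit t i₀ j₀).mulVec ((WithLp.equiv 2 (Fin n → ℂ)) x)
        = fun i => if i = Equiv.swap i₀ j₀ j₁ then (t : ℂ) else 0 := by
      funext i
      rw [Mwit_mulVec, hcoord]
      have hne : Equiv.swap i₀ j₀ j₁ ≠ i₀ := by
        intro h
        apply hj₁
        have := congrArg (Equiv.swap i₀ j₀) h
        rwa [Equiv.swap_apply_self, Equiv.swap_apply_left] at this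
      by_cases h : i = i₀
      · have h2 : i ≠ Equiv.swap i₀ j₀ j₁ := by rw [h]; exact fun hh => hne hh.symm
        rw [if_pos h, if_neg h2]
      · simp only [h, if_false]
        by_cases h2 : Equiv.swap i₀ j₀ i = j₁
        · have : i = Equiv.swap i₀ j₀ j₁ := by
            rw [← h2, Equiv.swap_apply_self]
          simp [h2, this]
        · have : i ≠ Equiv.swap i₀ j₀ j₁ := by
            intro hh
            apply h2
            rw [hh, Equiv.swap_apply_self]
          simp [h2, this]
    rw [hMx, EuclideanSpace.norm_eq]
    have : ∀ i : Fin n, ‖(WithLp.equiv 2 (Fin n → ℂ)).symm (fun i => if i = Equiv.swap i₀ j₀ j₁ then (t : ℂ) else 0) i‖ ^ 2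
        = if i = Equiv.swap i₀ j₀ j₁ then t ^ 2 else 0 := by
      intro i
      show ‖if i = Equiv.swap i₀ j₀ j₁ then (t : ℂ) else 0‖ ^ 2 = _
      by_cases h : i = Equiv.swap i₀ j₀ j₁
      · simp [h, Complex.norm_real, abs_of_pos ht, sq_abs]
      · simp [h]
    rw [Finset.sum_congr rfl (fun i _ => this i), Finset.sum_ite_eq' Finset.univ _ (fun _ => t ^ 2)]
    simp [Real.sqrt_sq ht.le]
  -- combine
  have hbdd : BddAbove (Set.range fun x : Metric.sphere (0 : EuclideanSpace ℂ (Fin n)) 1 =>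
      ‖(WithLp.equiv 2 (Fin n → ℂ)).symm ((Mwit t i₀ j₀).mulVec ((WithLp.equiv 2 (Fin n → ℂ)) x.1))‖) :=
    ⟨t, by rintro r ⟨y, rfl⟩; exact hub y⟩
  have : Nonempty (Metric.sphere (0 : EuclideanSpace ℂ (Fin n)) 1) := ⟨⟨x, hmem⟩⟩
  apply le_antisymm
  · exact ciSup_le hub
  · have := le_ciSup hbdd (⟨x, hmem⟩ : Metric.sphere (0 : EuclideanSpace ℂ (Fin n)) 1)
    rwa [hwit] at this

-- Cauchy–Schwarz row bound
lemma cs_row {n : ℕ} (u w : Fin n → ℂ) :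
    ‖∑ j, u j * w j‖ ^ 2 ≤ (∑ j, ‖u j‖ ^ 2) * (∑ j, ‖w j‖ ^ 2) := by
  have h := norm_inner_le_norm (𝕜 := ℂ)
    ((WithLp.equiv 2 (Fin n → ℂ)).symm (fun j => starRingEnd ℂ (u j)))
    ((WithLp.equiv 2 (Fin n → ℂ)).symm w)
  have hinner : (inner ℂ ((WithLp.equiv 2 (Fin n → ℂ)).symm (fun j => starRingEnd ℂ (u j)))
      ((WithLp.equiv 2 (Fin n → ℂ)).symm w) : ℂ) = ∑ j, u j * w j := by
    rw [PiLp.inner_apply]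
    congr 1
    funext j
    simp [RCLike.inner_apply, mul_comm]
  rw [hinner, euclid_norm, euclid_norm] at h
  have h1 : (∑ j, ‖starRingEnd ℂ (u j)‖ ^ 2) = ∑ j, ‖u j‖ ^ 2 := by
    congr 1; funext j; rw [RCLike.norm_conj]
  rw [h1] at h
  have hs : 0 ≤ Real.sqrt (∑ j, ‖u j‖ ^ 2) * Real.sqrt (∑ j, ‖w j‖ ^ 2) := by positivity
  calc ‖∑ j, u j * w j‖ ^ 2 ≤ (Real.sqrt (∑ j, ‖u j‖ ^ 2) * Real.sqrt (∑ j, ‖w j‖ ^ 2)) ^ 2 := by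
        apply pow_le_pow_left₀ (norm_nonneg _) h
    _ = (∑ j, ‖u j‖ ^ 2) * (∑ j, ‖w j‖ ^ 2) := by
        rw [mul_pow, Real.sq_sqrt (by positivity), Real.sq_sqrt (by positivity)]

lemma lsv_bound {n : ℕ} {t l S F : ℝ} (ht : 0 < t) (hl : 0 < l)
    (i₀ j₀ : Fin n) (A : Matrix (Fin n) (Fin n) ℂ) (hA0 : A i₀ j₀ = 0)
    (hS : ∑ i, ‖A i j₀‖ ^ 2 ≤ S) (hF : ∑ i, ∑ j, ‖A i j‖ ^ 2 ≤ F) :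
    lsv (Mwit t i₀ j₀ + l • A) ≤ l ^ 2 / t * (Real.sqrt S * Real.sqrt F) := by
  have hS0 : 0 ≤ S := le_trans (by positivity) hS
  have hF0 : 0 ≤ F := le_trans (by positivity) hF
  set σ := Equiv.swap i₀ j₀ with hσ
  set δ : Fin n → ℂ := fun j => if j = j₀ then 0 else -((l/t : ℝ) : ℂ) * A (σ j) j₀ with hδ
  set x : Fin n → ℂ := fun j => if j = j₀ then 1 else δ j with hx
  -- key computation
  have hkey : (Mwit t i₀ j₀ + l • A).mulVec x = l • A.mulVec δ := by
    funext i
    rw [Matrix.add_mulVec, Matrix.smul_mulVec]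
    have hM : (Mwit t i₀ j₀).mulVec x i = -(l : ℂ) * A i j₀ := by
      rw [Mwit_mulVec]
      by_cases h : i = i₀
      · rw [if_pos h, h, hA0]; ring
      · rw [if_neg h]
        have hσi : σ i ≠ j₀ := by
          intro hh
          apply h
          have := congrArg σ hh
          rwa [hσ, Equiv.swap_apply_self, Equiv.swap_apply_right] at this
        have : x (σ i) = -((l/t : ℝ) : ℂ) * A (σ (σ i)) j₀ := by
          rw [hx]; simp only [if_neg hσi, hδ]
        rw [this, hσ, Equiv.swap_apply_self]
        have htC : (t:ℂ) ≠ 0 := Complex.ofReal_ne_zero.mpr ht.ne'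
        push_cast
        field_simp
    have hA : A.mulVec x i = A i j₀ + A.mulVec δ i := by
      unfold Matrix.mulVec dotProduct
      have : ∀ j, A i j * x j = (if j = j₀ then A i j₀ else 0) + A i j * δ j := by
        intro j
        by_cases h : j = j₀
        · rw [hx]; simp only [h, if_pos rfl]
          rw [hδ]; simp only [if_pos rfl]
          ring_nf
          simp [h]
        · rw [hx]; simp only [if_neg h, zero_add]
      rw [Finset.sum_congr rfl fun j _ => this j, Finset.sum_add_distrib,
        Finset.sum_ite_eq' Finset.univ j₀ (fun _ => A i j₀)]
      simp
    show (Mwit t i₀ j₀).mulVec x i + (l • A.mulVec x) i = (l • A.mulVec δ) i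
    rw [hM]
    simp only [Pi.smul_apply]
    rw [hA]
    rw [smul_add]
    push_cast
    rw [Complex.real_smul, Complex.real_smul]
    ring
  -- x has norm ≥ 1
  have hx1 : 1 ≤ ‖(WithLp.equiv 2 (Fin n → ℂ)).symm x‖ := by
    rw [euclid_norm]
    rw [show (1:ℝ) = Real.sqrt 1 by rw [Real.sqrt_one]]
    apply Real.sqrt_le_sqrt
    calc (1:ℝ) = ‖x j₀‖ ^ 2 := by rw [hx]; simp
      _ ≤ ∑ j, ‖x j‖ ^ 2 :=
          Finset.single_le_sum (f := fun j => ‖x j‖ ^ 2) (fun j _ => by positivity) (Finset.mem_univ j₀)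
  -- δ norm bound
  have hδS : ∑ j, ‖δ j‖ ^ 2 ≤ (l/t) ^ 2 * S := by
    have : ∀ j, ‖δ j‖ ^ 2 ≤ (l/t)^2 * ‖A (σ j) j₀‖ ^ 2 := by
      intro j
      rw [hδ]
      by_cases h : j = j₀
      · simp [h]; positivity
      · simp only [if_neg h]
        rw [norm_mul, norm_neg, Complex.norm_real, Real.norm_eq_abs,
          abs_of_pos (by positivity), mul_pow]
    calc ∑ j, ‖δ j‖ ^ 2 ≤ ∑ j, (l/t)^2 * ‖A (σ j) j₀‖ ^ 2 :=
          Finset.sum_le_sum fun j _ => this j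
      _ = (l/t)^2 * ∑ j, ‖A (σ j) j₀‖ ^ 2 := by rw [Finset.mul_sum]
      _ = (l/t)^2 * ∑ i, ‖A i j₀‖ ^ 2 := by
          congr 1; exact Equiv.sum_comp σ (fun i => ‖A i j₀‖ ^ 2)
      _ ≤ (l/t)^2 * S := by
          apply mul_le_mul_of_nonneg_left hS (by positivity)
  -- Aδ bound
  have hAδ : ∑ i, ‖A.mulVec δ i‖ ^ 2 ≤ F * ((l/t)^2 * S) := by
    have hrow : ∀ i, ‖A.mulVec δ i‖ ^ 2 ≤ (∑ j, ‖A i j‖ ^ 2) * (∑ j, ‖δ j‖ ^ 2) := by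
      intro i
      exact cs_row (fun j => A i j) δ
    calc ∑ i, ‖A.mulVec δ i‖ ^ 2 ≤ ∑ i, (∑ j, ‖A i j‖ ^ 2) * (∑ j, ‖δ j‖ ^ 2) :=
          Finset.sum_le_sum fun i _ => hrow i
      _ = (∑ i, ∑ j, ‖A i j‖ ^ 2) * (∑ j, ‖δ j‖ ^ 2) := by rw [Finset.sum_mul]
      _ ≤ F * ((l/t)^2 * S) := by
          apply mul_le_mul hF hδS (by positivity) hF0
  -- finish
  have h1 := lsv_le (Mwit t i₀ j₀ + l • A) x hx1
  rw [hkey] at h1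
  have h2 : (WithLp.equiv 2 (Fin n → ℂ)).symm (l • A.mulVec δ)
      = l • (WithLp.equiv 2 (Fin n → ℂ)).symm (A.mulVec δ) := by simp
  rw [h2, norm_smul, Real.norm_eq_abs, abs_of_pos hl] at h1
  have h3 : ‖(WithLp.equiv 2 (Fin n → ℂ)).symm (A.mulVec δ)‖ ≤ Real.sqrt (F * ((l/t)^2 * S)) := by
    rw [euclid_norm]
    exact Real.sqrt_le_sqrt hAδ
  calc lsv (Mwit t i₀ j₀ + l • A) ≤ l * ‖(WithLp.equiv 2 (Fin n → ℂ)).symm (A.mulVec δ)‖ := h1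
    _ ≤ l * Real.sqrt (F * ((l/t)^2 * S)) := by
        exact mul_le_mul_of_nonneg_left h3 hl.le
    _ = l ^ 2 / t * (Real.sqrt S * Real.sqrt F) := by
        rw [Real.sqrt_mul hF0, Real.sqrt_mul (sq_nonneg _), Real.sqrt_sq (by positivity)]
        field_simp

/-- Theorem `shift`. Let `n ≥ 2`, `K > 0`, and let `A` be an `n × n`
random matrix with mutually independent complex entries `a i j` with `E|a i j|² ≤ K`.
Suppose `P(a i₀ j₀ = 0) = P > 0` for some entry. Then there is a constant `C > 0` depending
only on `P` and `K` such that for every `λ > 0` and `t > 0` there is a deterministic matrix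
`M` with `‖M‖_op = t` and `P[σ_n(M + λA) ≤ C λ² n^(3/2)/t] ≥ 0.99·P`. -/
theorem stmt16 (P K : ℝ) (hP : 0 < P) (hK : 0 < K) :
    ∃ C > (0 : ℝ),
      ∀ (n : ℕ), 2 ≤ n →
      ∀ (Ω : Type) [MeasureSpace Ω], IsProbabilityMeasure (ℙ : Measure Ω) →
      ∀ a : Fin n → Fin n → Ω → ℂ,
        (∀ i j, Measurable (a i j)) →
        iIndepFun (fun q : Fin n × Fin n => a q.1 q.2) ℙ →
        (∀ i j, ∫⁻ ω, (‖a i j ω‖₊ : ENNReal) ^ 2 ∂ℙ ≤ ENNReal.ofReal K) →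
        ∀ i₀ j₀ : Fin n, ℙ {ω | a i₀ j₀ ω = 0} = ENNReal.ofReal P →
        ∀ l : ℝ, 0 < l → ∀ t : ℝ, 0 < t →
          ∃ M : Matrix (Fin n) (Fin n) ℂ, opNorm M = t ∧
            ENNReal.ofReal (0.99 * P) ≤
              ℙ {ω | lsv (M + l • Matrix.of fun i j => a i j ω) ≤
                  C * l ^ 2 * (n : ℝ) ^ (3 / 2 : ℝ) / t} := by
  refine ⟨200 * K / P, by positivity, ?_⟩
  intro n hn Ω _ hprob a hmeas _ hmom i₀ j₀ hPzero l hl t ht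
  have hn0 : (0:ℝ) < n := by positivity
  refine ⟨Mwit t i₀ j₀, opNorm_Mwit hn ht i₀ j₀, ?_⟩
  set S : ℝ := 200 * n * K / P with hSdef
  set F : ℝ := 200 * n ^ 2 * K / P with hFdef
  have hSpos : 0 < S := by positivity
  have hFpos : 0 < F := by positivity
  set f₁ : Ω → ℝ≥0∞ := fun ω => ∑ i, ((‖a i j₀ ω‖₊ : ℝ≥0∞)) ^ 2 with hf₁
  set f₂ : Ω → ℝ≥0∞ := fun ω => ∑ i, ∑ j, ((‖a i j ω‖₊ : ℝ≥0∞)) ^ 2 with hf₂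
  have hmf₁ : Measurable f₁ :=
    Finset.measurable_sum _ fun i _ => ((hmeas i j₀).nnnorm.coe_nnreal_ennreal).pow_const 2
  have hmf₂ : Measurable f₂ :=
    Finset.measurable_sum _ fun i _ =>
      Finset.measurable_sum _ fun j _ => ((hmeas i j).nnnorm.coe_nnreal_ennreal).pow_const 2
  set Z := {ω | a i₀ j₀ ω = 0} with hZ
  set B₁ := {ω : Ω | ENNReal.ofReal S ≤ f₁ ω} with hB₁
  set B₂ := {ω : Ω | ENNReal.ofReal F ≤ f₂ ω} with hB₂
  -- Markov for B₁
  have hint₁ : ∫⁻ ω, f₁ ω ∂ℙ ≤ ENNReal.ofReal (n * K) := by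
    rw [hf₁]
    rw [lintegral_finset_sum _ fun i _ => ((hmeas i j₀).nnnorm.coe_nnreal_ennreal).pow_const 2]
    calc ∑ i : Fin n, ∫⁻ ω, ((‖a i j₀ ω‖₊ : ℝ≥0∞)) ^ 2 ∂ℙ
        ≤ ∑ _i : Fin n, ENNReal.ofReal K := Finset.sum_le_sum fun i _ => hmom i j₀
      _ = n * ENNReal.ofReal K := by rw [Finset.sum_const, Finset.card_univ, Fintype.card_fin]; simp [nsmul_eq_mul]
      _ = ENNReal.ofReal (n * K) := by
          rw [ENNReal.ofReal_mul (by positivity)]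
          congr 1
          simp [ENNReal.ofReal_natCast]
  have hmark₁ : ℙ B₁ ≤ ENNReal.ofReal (0.005 * P) := by
    calc ℙ B₁ ≤ (∫⁻ ω, f₁ ω ∂ℙ) / ENNReal.ofReal S :=
          meas_ge_le_lintegral_div hmf₁.aemeasurable (by positivity) ENNReal.ofReal_ne_top
      _ ≤ ENNReal.ofReal (n * K) / ENNReal.ofReal S := by
          exact ENNReal.div_le_div_right hint₁ _
      _ = ENNReal.ofReal ((n * K) / S) := by
          rw [ENNReal.ofReal_div_of_pos hSpos]
      _ = ENNReal.ofReal (0.005 * P) := by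
          congr 1
          rw [hSdef]
          field_simp
          ring
  have hint₂ : ∫⁻ ω, f₂ ω ∂ℙ ≤ ENNReal.ofReal (n ^ 2 * K) := by
    rw [hf₂]
    rw [lintegral_finset_sum _ fun i _ =>
      Finset.measurable_sum _ fun j _ => ((hmeas i j).nnnorm.coe_nnreal_ennreal).pow_const 2]
    calc ∑ i : Fin n, ∫⁻ ω, (∑ j, ((‖a i j ω‖₊ : ℝ≥0∞)) ^ 2) ∂ℙ
        = ∑ i : Fin n, ∑ j : Fin n, ∫⁻ ω, ((‖a i j ω‖₊ : ℝ≥0∞)) ^ 2 ∂ℙ := by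
          refine Finset.sum_congr rfl fun i _ => ?_
          rw [lintegral_finset_sum _ fun j _ => ((hmeas i j).nnnorm.coe_nnreal_ennreal).pow_const 2]
      _ ≤ ∑ _i : Fin n, ∑ _j : Fin n, ENNReal.ofReal K :=
          Finset.sum_le_sum fun i _ => Finset.sum_le_sum fun j _ => hmom i j
      _ = (n * n) * ENNReal.ofReal K := by
          simp [Finset.sum_const, Finset.card_univ, nsmul_eq_mul]; ring
      _ = ENNReal.ofReal (n ^ 2 * K) := by
          rw [ENNReal.ofReal_mul (by positivity)]
          congr 1
          rw [show ((n:ℝ))^2 = (n:ℝ) * n by ring]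
          rw [ENNReal.ofReal_mul (by positivity)]
          simp [ENNReal.ofReal_natCast]
  have hmark₂ : ℙ B₂ ≤ ENNReal.ofReal (0.005 * P) := by
    calc ℙ B₂ ≤ (∫⁻ ω, f₂ ω ∂ℙ) / ENNReal.ofReal F :=
          meas_ge_le_lintegral_div hmf₂.aemeasurable (by positivity) ENNReal.ofReal_ne_top
      _ ≤ ENNReal.ofReal (n ^ 2 * K) / ENNReal.ofReal F := ENNReal.div_le_div_right hint₂ _
      _ = ENNReal.ofReal ((n ^ 2 * K) / F) := by rw [ENNReal.ofReal_div_of_pos hFpos]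
      _ = ENNReal.ofReal (0.005 * P) := by
          congr 1
          rw [hFdef]
          field_simp
          ring
  -- inclusion
  have hsub : Z \ (B₁ ∪ B₂) ⊆ {ω | lsv (Mwit t i₀ j₀ + l • Matrix.of fun i j => a i j ω) ≤
      200 * K / P * l ^ 2 * (n : ℝ) ^ (3 / 2 : ℝ) / t} := by
    rintro ω ⟨hωZ, hωB⟩
    simp only [Set.mem_union, not_or] at hωB
    obtain ⟨hω1, hω2⟩ := hωB
    have hg1 : f₁ ω ≤ ENNReal.ofReal S := le_of_lt (lt_of_not_ge (by exact fun h => hω1 h))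
    have hg2 : f₂ ω ≤ ENNReal.ofReal F := le_of_lt (lt_of_not_ge (by exact fun h => hω2 h))
    -- convert to real sums
    have hconv : ∀ (g : Fin n → ℂ), (∑ i, ((‖g i‖₊ : ℝ≥0∞)) ^ 2) = ENNReal.ofReal (∑ i, ‖g i‖ ^ 2) := by
      intro g
      rw [ENNReal.ofReal_sum_of_nonneg (fun i _ => by positivity)]
      refine Finset.sum_congr rfl fun i _ => ?_
      rw [← enorm_eq_nnnorm, ← ofReal_norm, ← ENNReal.ofReal_pow (norm_nonneg _)]
    have hS' : ∑ i, ‖a i j₀ ω‖ ^ 2 ≤ S := by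
      have : ENNReal.ofReal (∑ i, ‖a i j₀ ω‖ ^ 2) ≤ ENNReal.ofReal S := by
        rw [← hconv (fun i => a i j₀ ω)]; exact hg1
      exact (ENNReal.ofReal_le_ofReal_iff hSpos.le).mp this
    have hF' : ∑ i, ∑ j, ‖a i j ω‖ ^ 2 ≤ F := by
      have heq : f₂ ω = ENNReal.ofReal (∑ i, ∑ j, ‖a i j ω‖ ^ 2) := by
        rw [hf₂]
        rw [ENNReal.ofReal_sum_of_nonneg (fun i _ => by positivity)]
        exact Finset.sum_congr rfl fun i _ => hconv (fun j => a i j ω)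
      rw [heq] at hg2
      exact (ENNReal.ofReal_le_ofReal_iff hFpos.le).mp hg2
    have hb := lsv_bound ht hl i₀ j₀ (Matrix.of fun i j => a i j ω) (by simpa using (show a i₀ j₀ ω = 0 from hωZ)) hS' hF'
    have hsqrt : Real.sqrt S * Real.sqrt F = 200 * K / P * (n : ℝ) ^ (3 / 2 : ℝ) := by
      rw [← Real.sqrt_mul hSpos.le]
      have h1 : S * F = (200 * K / P) ^ 2 * ((n:ℝ) ^ 3) := by
        rw [hSdef, hFdef]; field_simp
      rw [h1, Real.sqrt_mul (by positivity), Real.sqrt_sq (by positivity)]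
      congr 1
      rw [show (3/2 : ℝ) = (3 : ℝ) * (2⁻¹ : ℝ) by norm_num,
        Real.rpow_mul (by positivity), Real.sqrt_eq_rpow]
      norm_num
    show lsv _ ≤ _
    calc lsv (Mwit t i₀ j₀ + l • Matrix.of fun i j => a i j ω)
        ≤ l ^ 2 / t * (Real.sqrt S * Real.sqrt F) := hb
      _ = 200 * K / P * l ^ 2 * (n : ℝ) ^ (3 / 2 : ℝ) / t := by rw [hsqrt]; ring
  -- measure arithmetic
  have hZB : ℙ Z ≤ ℙ (Z \ (B₁ ∪ B₂)) + ENNReal.ofReal (0.005 * P) + ENNReal.ofReal (0.005 * P) := by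
    calc ℙ Z ≤ ℙ ((Z \ (B₁ ∪ B₂)) ∪ (B₁ ∪ B₂)) := measure_mono (by
          intro ω hω
          by_cases h : ω ∈ B₁ ∪ B₂
          · exact Or.inr h
          · exact Or.inl ⟨hω, h⟩)
      _ ≤ ℙ (Z \ (B₁ ∪ B₂)) + ℙ (B₁ ∪ B₂) := measure_union_le _ _
      _ ≤ ℙ (Z \ (B₁ ∪ B₂)) + (ℙ B₁ + ℙ B₂) := by
          gcongr
          exact measure_union_le _ _
      _ ≤ ℙ (Z \ (B₁ ∪ B₂)) + (ENNReal.ofReal (0.005 * P) + ENNReal.ofReal (0.005 * P)) := by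
          gcongr
      _ = _ := by ring
  have hfinal : ENNReal.ofReal (0.99 * P) ≤ ℙ (Z \ (B₁ ∪ B₂)) := by
    have h1 : ENNReal.ofReal (0.99 * P) + (ENNReal.ofReal (0.005 * P) + ENNReal.ofReal (0.005 * P))
        = ENNReal.ofReal P := by
      rw [← ENNReal.ofReal_add (by positivity) (by positivity),
        ← ENNReal.ofReal_add (by positivity) (by positivity)]
      congr 1
      ring
    have h2 : ENNReal.ofReal (0.99 * P) + (ENNReal.ofReal (0.005 * P) + ENNReal.ofReal (0.005 * P))
        ≤ ℙ (Z \ (B₁ ∪ B₂)) + (ENNReal.ofReal (0.005 * P) + ENNReal.ofReal (0.005 * P)) := by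
      rw [h1, ← hPzero]
      calc ℙ Z ≤ ℙ (Z \ (B₁ ∪ B₂)) + ENNReal.ofReal (0.005 * P) + ENNReal.ofReal (0.005 * P) := hZB
        _ = _ := by ring
    exact (ENNReal.add_le_add_iff_right (by finiteness)).mp h2
  exact le_trans hfinal (measure_mono hsub)
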